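/- Let U be a random vector taking values in the nonnegative orthant of ℝ^n with finite, positive definite covariance matrix, Y = 𝒫(U), and suppose E[U | Y = y] = H y + c for every y ∈ ℤ^n_{≥0}, for some matrix H ∈ ℝ^{n×n} and vector c ∈ ℝ^n. Then every diagonal entry of H satisfies 0 < h_ii < 1. -/

import Mathlib

open MeasureTheory ProbabilityTheory
open Matrix
open scoped ENNReal

noncomputable section

/-- The probability mass function of the Poisson distribution with (real) mean `m`,
evaluated at `k` (with the convention `0 ^ 0 = 1`). -/
def poissonP (m : ℝ) (k : ℕ) : ℝ := m ^ k * Real.exp (-m) / (Nat.factorial k)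

section auxlemmas

open scoped ENNReal

lemma poissonP_nonneg {m : ℝ} (hm : 0 ≤ m) (k : ℕ) : 0 ≤ poissonP m k := by
  unfold poissonP; positivity

lemma measurable_poissonP (k : ℕ) : Measurable fun m => poissonP m k := by
  unfold poissonP
  fun_prop

lemma hasSum_poissonP {m : ℝ} (hm : 0 ≤ m) : HasSum (fun k => poissonP m k) 1 := by
  have h := ProbabilityTheory.poissonPMFRealSum m.toNNReal
  have : (fun k => ProbabilityTheory.poissonPMFReal m.toNNReal k) = fun k => poissonP m k := by
    ext k
    unfold ProbabilityTheory.poissonPMFReal poissonP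
    rw [Real.coe_toNNReal m hm]
    ring
  rw [← this]; exact h

lemma poissonP_le_one {m : ℝ} (hm : 0 ≤ m) (k : ℕ) : poissonP m k ≤ 1 := by
  have h := hasSum_poissonP hm
  exact le_of_le_of_eq (le_hasSum h k (fun b _ => poissonP_nonneg hm b)) rfl |>.trans le_rfl

lemma poissonP_succ (m : ℝ) (k : ℕ) : (k + 1 : ℝ) * poissonP m (k + 1) = m * poissonP m k := by
  unfold poissonP
  rw [Nat.factorial_succ, pow_succ]
  push_cast
  field_simp

lemma hasSum_mul_poissonP {m : ℝ} (hm : 0 ≤ m) :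
    HasSum (fun k : ℕ => (k : ℝ) * poissonP m k) m := by
  rw [← hasSum_nat_add_iff' 1]
  simp only [Finset.range_one, Finset.sum_singleton, Nat.cast_zero, zero_mul, sub_zero]
  have : (fun k : ℕ => ((k + 1 : ℕ) : ℝ) * poissonP m (k + 1))
      = fun k : ℕ => m * poissonP m k := by
    ext k; push_cast; rw [poissonP_succ]
  rw [this]
  simpa using (hasSum_poissonP hm).mul_left m

lemma hasSum_sq_mul_poissonP {m : ℝ} (hm : 0 ≤ m) :
    HasSum (fun k : ℕ => (k : ℝ) ^ 2 * poissonP m k) (m ^ 2 + m) := by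
  rw [← hasSum_nat_add_iff' 1]
  simp only [Finset.range_one, Finset.sum_singleton, Nat.cast_zero, zero_pow, zero_mul, sub_zero]
  have : (fun k : ℕ => ((k + 1 : ℕ) : ℝ) ^ 2 * poissonP m (k + 1))
      = fun k : ℕ => m * ((k : ℝ) * poissonP m k) + m * poissonP m k := by
    ext k
    push_cast
    have h := poissonP_succ m k
    nlinarith [h]
  rw [this]
  have := ((hasSum_mul_poissonP hm).mul_left m).add ((hasSum_poissonP hm).mul_left m)
  have e : m ^ 2 + m - 0 ^ 2 * poissonP m 0 = m * m + m * 1 := by ring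
  rw [e]; exact this

lemma ofReal_tsum_hasSum {f : ℕ → ℝ} {a : ℝ} (hnn : ∀ k, 0 ≤ f k) (h : HasSum f a) :
    ∑' k, ENNReal.ofReal (f k) = ENNReal.ofReal a := by
  rw [← ENNReal.ofReal_tsum_of_nonneg hnn h.summable, h.tsum_eq]

lemma tsum_q {m : ℝ} (hm : 0 ≤ m) : ∑' k, ENNReal.ofReal (poissonP m k) = 1 := by
  rw [ofReal_tsum_hasSum (poissonP_nonneg hm) (hasSum_poissonP hm), ENNReal.ofReal_one]

lemma tsum_q1 {m : ℝ} (hm : 0 ≤ m) :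
    ∑' k : ℕ, (k : ℝ≥0∞) * ENNReal.ofReal (poissonP m k) = ENNReal.ofReal m := by
  rw [← ofReal_tsum_hasSum (f := fun k : ℕ => (k : ℝ) * poissonP m k)
    (fun k => mul_nonneg (Nat.cast_nonneg k) (poissonP_nonneg hm k)) (hasSum_mul_poissonP hm)]
  congr 1; ext k
  rw [ENNReal.ofReal_mul (Nat.cast_nonneg k), ENNReal.ofReal_natCast]

lemma tsum_q2 {m : ℝ} (hm : 0 ≤ m) :
    ∑' k : ℕ, (k : ℝ≥0∞) ^ 2 * ENNReal.ofReal (poissonP m k) = ENNReal.ofReal (m ^ 2 + m) := by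
  rw [← ofReal_tsum_hasSum (f := fun k : ℕ => (k : ℝ) ^ 2 * poissonP m k)
    (fun k => mul_nonneg (by positivity) (poissonP_nonneg hm k)) (hasSum_sq_mul_poissonP hm)]
  congr 1; ext k
  rw [ENNReal.ofReal_mul (by positivity), ENNReal.ofReal_pow (Nat.cast_nonneg k),
    ENNReal.ofReal_natCast]

lemma tsum_pi_prod : ∀ {n : ℕ} (f : Fin n → ℕ → ℝ≥0∞),
    ∑' y : Fin n → ℕ, ∏ j, f j (y j) = ∏ j, ∑' k, f j k := by
  intro n
  induction n with
  | zero =>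
    intro f
    rw [tsum_eq_single (fun _ => 0) (fun b hb => absurd (Subsingleton.elim b _) hb)]
    simp
  | succ n ih =>
    intro f
    rw [← (Fin.consEquiv (fun _ : Fin (n + 1) => ℕ)).tsum_eq, ENNReal.tsum_prod']
    simp only [Fin.consEquiv_apply]
    have h1 : ∀ (a : ℕ) (g : Fin n → ℕ),
        (∏ j, f j (Fin.cons (α := fun _ => ℕ) a g j)) = f 0 a * ∏ j : Fin n, f j.succ (g j) := by
      intro a g
      rw [Fin.prod_univ_succ]
      simp
    simp only [h1]
    simp only [ENNReal.tsum_mul_left, ENNReal.tsum_mul_right]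
    rw [ih, Fin.prod_univ_succ]

section weights
variable {n : ℕ} {u : Fin n → ℝ} (hu : ∀ j, 0 ≤ u j)

lemma tsum_weight (g : Fin n → ℕ → ℝ≥0∞) (r : Fin n → ℝ≥0∞)
    (h : ∀ j, ∑' m : ℕ, g j m * ENNReal.ofReal (poissonP (u j) m) = r j) :
    ∑' y : Fin n → ℕ,
      (∏ j, g j (y j)) * ∏ j, ENNReal.ofReal (poissonP (u j) (y j)) = ∏ j, r j := by
  have : ∀ y : Fin n → ℕ, (∏ j, g j (y j)) * ∏ j, ENNReal.ofReal (poissonP (u j) (y j))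
      = ∏ j, g j (y j) * ENNReal.ofReal (poissonP (u j) (y j)) := by
    intro y; rw [Finset.prod_mul_distrib]
  simp only [this]
  exact (tsum_pi_prod (fun j m => g j m * ENNReal.ofReal (poissonP (u j) m))).trans
    (Finset.prod_congr rfl fun j _ => h j)

include hu

lemma tsum_weight_zero :
    ∑' y : Fin n → ℕ, ∏ j, ENNReal.ofReal (poissonP (u j) (y j)) = 1 := by
  have := tsum_weight (u := u) (fun _ _ => 1) (fun _ => 1)
    (fun j => by simpa using tsum_q (hu j))
  simpa using this

lemma tsum_weight_one (k : Fin n) :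
    ∑' y : Fin n → ℕ, (y k : ℝ≥0∞) * ∏ j, ENNReal.ofReal (poissonP (u j) (y j))
      = ENNReal.ofReal (u k) := by
  have := tsum_weight (u := u) (fun j m => if j = k then (m : ℝ≥0∞) else 1)
    (fun j => if j = k then ENNReal.ofReal (u j) else 1) (fun j => by
      split_ifs with hj
      · simpa using tsum_q1 (hu j)
      · simpa using tsum_q (hu j))
  rw [Finset.prod_ite_eq' Finset.univ k (fun j => ENNReal.ofReal (u j))] at this
  simp only [Finset.mem_univ, if_true] at this
  rw [← this]
  congr 1; ext y
  rw [Finset.prod_ite_eq' Finset.univ k (fun j => (y j : ℝ≥0∞))]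
  simp

lemma tsum_weight_pair (j k : Fin n) :
    ∑' y : Fin n → ℕ, (y j : ℝ≥0∞) * (y k : ℝ≥0∞)
        * ∏ l, ENNReal.ofReal (poissonP (u l) (y l))
      = ENNReal.ofReal (u j) * ENNReal.ofReal (u k)
        + (if j = k then ENNReal.ofReal (u j) else 0) := by
  by_cases hjk : j = k
  · subst hjk
    simp only [if_true]
    have := tsum_weight (u := u) (fun l m => if l = j then (m : ℝ≥0∞) ^ 2 else 1)
      (fun l => if l = j then ENNReal.ofReal (u l ^ 2 + u l) else 1) (fun l => by
        split_ifs with hl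
        · simpa using tsum_q2 (hu l)
        · simpa using tsum_q (hu l))
    rw [Finset.prod_ite_eq' Finset.univ j (fun l => ENNReal.ofReal (u l ^ 2 + u l))] at this
    simp only [Finset.mem_univ, if_true] at this
    have h2 : ENNReal.ofReal (u j ^ 2 + u j)
        = ENNReal.ofReal (u j) * ENNReal.ofReal (u j) + ENNReal.ofReal (u j) := by
      rw [ENNReal.ofReal_add (by positivity) (hu j), sq, ENNReal.ofReal_mul (hu j)]
    rw [h2] at this
    rw [← this]
    congr 1; ext y
    rw [Finset.prod_ite_eq' Finset.univ j (fun l => (y l : ℝ≥0∞) ^ 2)]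
    simp [sq]
  · simp only [hjk, if_false, add_zero]
    have := tsum_weight (u := u)
      (fun l m => (if l = j then (m : ℝ≥0∞) else 1) * (if l = k then (m : ℝ≥0∞) else 1))
      (fun l => (if l = j then ENNReal.ofReal (u l) else 1)
        * (if l = k then ENNReal.ofReal (u l) else 1)) (fun l => by
        by_cases hl : l = j
        · subst hl
          simp only [if_true, hjk, if_false, mul_one, one_mul]
          simpa using tsum_q1 (hu l)
        · by_cases hl2 : l = k
          · subst hl2
            simp only [hl, if_false, if_true, one_mul]
            simpa using tsum_q1 (hu l)
          · simp only [hl, hl2, if_false, one_mul]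
            simpa using tsum_q (hu l))
    rw [Finset.prod_mul_distrib, Finset.prod_ite_eq' Finset.univ j
      (fun l => ENNReal.ofReal (u l)), Finset.prod_ite_eq' Finset.univ k
      (fun l => ENNReal.ofReal (u l))] at this
    simp only [Finset.mem_univ, if_true] at this
    rw [← this]
    congr 1; ext y
    rw [Finset.prod_mul_distrib, Finset.prod_ite_eq' Finset.univ j (fun l => (y l : ℝ≥0∞)),
      Finset.prod_ite_eq' Finset.univ k (fun l => (y l : ℝ≥0∞))]
    simp
end weights

open Matrix

lemma linalg_aux {n : ℕ} (S : Matrix (Fin n) (Fin n) ℝ) (d : Fin n → ℝ)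
    (hS : S.PosDef) (hd : ∀ j, 0 < d j) (H : Matrix (Fin n) (Fin n) ℝ)
    (hH : S = H * (S + Matrix.diagonal d)) : ∀ i, 0 < H i i ∧ H i i < 1 := by
  intro i
  set M : Matrix (Fin n) (Fin n) ℝ := S + Matrix.diagonal d with hMdef
  have hM : M.PosDef := hS.add_posSemidef (Matrix.PosDef.diagonal hd).posSemidef
  haveI := hM.isUnit.invertible
  have hMinv : (M⁻¹).PosDef := hM.inv
  have hHe : H = 1 - Matrix.diagonal d * M⁻¹ := by
    have h1 : H = S * M⁻¹ := by
      rw [hH, Matrix.mul_inv_cancel_right_of_invertible]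
    have h2 : S = M - Matrix.diagonal d := by simp [hMdef]
    rw [h1, h2, Matrix.sub_mul, Matrix.mul_inv_of_invertible]
  set t : ℝ := M⁻¹ i i with htdef
  have hesingle : (0 : Fin n → ℝ) ≠ Pi.single i 1 := by
    intro h
    have := congrFun h i
    simp at this
  have ht : 0 < t := by
    have := hMinv.dotProduct_mulVec_pos (Ne.symm hesingle)
    rwa [star_trivial, Matrix.mulVec_single_one, dotProduct, Finset.sum_eq_single i
      (fun b _ hb => by simp [Pi.single_eq_of_ne hb]) (by simp), Pi.single_eq_same, one_mul] at this
  set x : Fin n → ℝ := M⁻¹ *ᵥ Pi.single i 1 with hxdef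
  have hxi : x i = t := by
    rw [hxdef, Matrix.mulVec_single]
    simp [htdef]
  have hx0 : x ≠ 0 := by
    intro h
    rw [h] at hxi
    simp at hxi
    exact ht.ne' hxi.symm
  have hMx : x ⬝ᵥ M *ᵥ x = t := by
    rw [hxdef, Matrix.mulVec_mulVec, Matrix.mul_inv_of_invertible, Matrix.one_mulVec]
    rw [dotProduct_single, ← hxdef, mul_one, hxi]
  have hDx : x ⬝ᵥ (Matrix.diagonal d) *ᵥ x = ∑ j, d j * x j ^ 2 := by
    simp only [dotProduct, Matrix.mulVec_diagonal]
    congr 1; ext j; ring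
  have hSx : 0 < x ⬝ᵥ S *ᵥ x := by
    have := hS.dotProduct_mulVec_pos hx0
    rwa [star_trivial] at this
  have hlt : ∑ j, d j * x j ^ 2 < t := by
    have h2 : S = M - Matrix.diagonal d := by simp [hMdef]
    rw [h2, Matrix.sub_mulVec, dotProduct_sub, hMx, hDx] at hSx
    linarith
  have hget : d i * t ^ 2 ≤ ∑ j, d j * x j ^ 2 := by
    rw [← hxi]
    exact Finset.single_le_sum (f := fun j => d j * x j ^ 2)
      (fun j _ => mul_nonneg (hd j).le (sq_nonneg _)) (Finset.mem_univ i)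
  have hdt1 : d i * t < 1 := by
    have h := lt_of_le_of_lt hget hlt
    nlinarith [hd i, ht]
  have hHii : H i i = 1 - d i * t := by
    rw [hHe]
    simp [Matrix.sub_apply, Matrix.diagonal_mul, Matrix.one_apply_eq, htdef]
  constructor
  · rw [hHii]; linarith
  · rw [hHii]
    have : 0 < d i * t := mul_pos (hd i) ht
    linarith

lemma hasSum_toReal_of_tsum_eq {ι : Type*} {F : ι → ℝ≥0∞} {L : ℝ≥0∞}
    (hF : ∀ y, F y ≠ ⊤) (hL : L ≠ ⊤) (h : ∑' y, F y = L) :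
    HasSum (fun y => (F y).toReal) L.toReal := by
  have hs : Summable fun y => (F y).toReal := ENNReal.summable_toReal (h ▸ hL)
  have ht : ∑' y, (F y).toReal = L.toReal := by rw [← ENNReal.tsum_toReal_eq hF, h]
  exact ht ▸ hs.hasSum

lemma posDef_diag_pos {n : ℕ} {M : Matrix (Fin n) (Fin n) ℝ} (h : M.PosDef) (i : Fin n) :
    0 < M i i := by
  have h0 : (0 : Fin n → ℝ) ≠ Pi.single i 1 := by
    intro h; have := congrFun h i; simp at this
  have := h.dotProduct_mulVec_pos (Ne.symm h0)
  rwa [star_trivial, Matrix.mulVec_single_one, dotProduct, Finset.sum_eq_single i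
    (fun b _ hb => by simp [Pi.single_eq_of_ne hb]) (by simp), Pi.single_eq_same, one_mul] at this

end auxlemmas

/-- `Y = 𝒫(U)` : `U` takes values in the nonnegative orthant and, conditionally on `U = u`,
the coordinates of `Y` are independent with `Y i` Poisson distributed with mean `u i`. -/
def IsPoissonObs {Ω : Type} [MeasurableSpace Ω] (μ : Measure Ω) {n : ℕ}
    (U : Ω → Fin n → ℝ) (Y : Ω → Fin n → ℕ) : Prop :=
  Measurable U ∧ Measurable Y ∧ (∀ ω i, 0 ≤ U ω i) ∧
    ∀ (y : Fin n → ℕ) (B : Set (Fin n → ℝ)), MeasurableSet B →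
      (μ {ω | Y ω = y ∧ U ω ∈ B}).toReal
        = ∫ ω in {ω | U ω ∈ B}, ∏ i, poissonP (U ω i) (y i) ∂μ

/-- Conditional expectation of `f` given the event `A`. -/
def condExpEvent {Ω : Type} [MeasurableSpace Ω] (μ : Measure Ω) (A : Set Ω)
    (f : Ω → ℝ) : ℝ :=
  (∫ ω in A, f ω ∂μ) / (μ A).toReal

/-- The covariance matrix of a random vector `U`. -/
def covMatrix {Ω : Type} [MeasurableSpace Ω] (μ : Measure Ω) {n : ℕ}
    (U : Ω → Fin n → ℝ) : Matrix (Fin n) (Fin n) ℝ :=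
  Matrix.of fun i j =>
    ∫ ω, (U ω i - ∫ ω', U ω' i ∂μ) * (U ω j - ∫ ω', U ω' j ∂μ) ∂μ


/-- if `U` is nondegenerate (finite, positive definite covariance),
`Y = 𝒫(U)` and `E[U | Y = y] = H y + c` for all `y`, then `0 < h_ii < 1` for all `i`. -/
theorem stmt5 {Ω : Type} [MeasurableSpace Ω] (μ : Measure Ω) [IsProbabilityMeasure μ]
    {n : ℕ} (U : Ω → Fin n → ℝ) (Y : Ω → Fin n → ℕ)
    (hPo : IsPoissonObs μ U Y)
    (hmom : ∀ i, MemLp (fun ω => U ω i) 2 μ)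
    (hcov : (covMatrix μ U).PosDef)
    (H : Matrix (Fin n) (Fin n) ℝ) (c : Fin n → ℝ)
    (hlin : ∀ y : Fin n → ℕ, μ {ω | Y ω = y} ≠ 0 → ∀ i,
      condExpEvent μ {ω | Y ω = y} (fun ω => U ω i) = ∑ j, H i j * (y j : ℝ) + c i) :
    ∀ i : Fin n, 0 < H i i ∧ H i i < 1 := by
  obtain ⟨mU, mY, hU0, hPo⟩ := hPo
  -- measurability basics
  have mUi : ∀ i, Measurable fun ω => U ω i := fun i => (measurable_pi_apply i).comp mU
  have mVi : ∀ i, Measurable fun ω => ENNReal.ofReal (U ω i) :=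
    fun i => ENNReal.measurable_ofReal.comp (mUi i)
  have mg : ∀ y : Fin n → ℕ, Measurable fun u : Fin n → ℝ => ∏ j, poissonP (u j) (y j) :=
    fun y => Finset.measurable_prod _ fun j _ =>
      (measurable_poissonP (y j)).comp (measurable_pi_apply j)
  set G : (Fin n → ℕ) → Ω → ℝ≥0∞ :=
    fun y ω => ∏ j, ENNReal.ofReal (poissonP (U ω j) (y j)) with hGdef
  have hGof : ∀ (y : Fin n → ℕ) (ω : Ω),
      G y ω = ENNReal.ofReal (∏ j, poissonP (U ω j) (y j)) := by
    intro y ω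
    rw [ENNReal.ofReal_prod_of_nonneg fun j _ => poissonP_nonneg (hU0 ω j) (y j)]
  have mG : ∀ y, Measurable (G y) := by
    intro y
    have : G y = fun ω => ENNReal.ofReal (∏ j, poissonP (U ω j) (y j)) := funext (hGof y)
    rw [this]
    exact ENNReal.measurable_ofReal.comp ((mg y).comp mU)
  have hG1 : ∀ y ω, G y ω ≤ 1 := by
    intro y ω
    apply Finset.prod_le_one'
    intro j _
    exact ENNReal.ofReal_le_one.mpr (poissonP_le_one (hU0 ω j) (y j))
  have mS : ∀ y : Fin n → ℕ, MeasurableSet {ω | Y ω = y} := by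
    intro y
    exact mY (MeasurableSet.singleton y)
  -- key measure identity
  have key : ∀ y : Fin n → ℕ,
      (μ.restrict {ω | Y ω = y}).map U
        = (μ.map U).withDensity fun u => ENNReal.ofReal (∏ j, poissonP (u j) (y j)) := by
    intro y
    ext B hB
    rw [Measure.map_apply mU hB, Measure.restrict_apply (mU hB),
      withDensity_apply _ hB,
      setLIntegral_map (f := fun u : Fin n → ℝ => ENNReal.ofReal (∏ j, poissonP (u j) (y j)))
        hB (ENNReal.measurable_ofReal.comp (mg y)) mU]
    have hnn : 0 ≤ᵐ[μ.restrict {ω | U ω ∈ B}] fun ω => ∏ j, poissonP (U ω j) (y j) :=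
      ae_of_all _ fun ω => Finset.prod_nonneg fun j _ => poissonP_nonneg (hU0 ω j) (y j)
    have hint : Integrable (fun ω => ∏ j, poissonP (U ω j) (y j))
        (μ.restrict {ω | U ω ∈ B}) := by
      refine Integrable.mono' (integrable_const 1)
        ((mg y).comp mU).aestronglyMeasurable (ae_of_all _ fun ω => ?_)
      rw [Real.norm_eq_abs,
        abs_of_nonneg (Finset.prod_nonneg fun j _ => poissonP_nonneg (hU0 ω j) (y j))]
      exact Finset.prod_le_one (fun j _ => poissonP_nonneg (hU0 ω j) (y j))
        (fun j _ => poissonP_le_one (hU0 ω j) (y j))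
    have h2 := ofReal_integral_eq_lintegral_ofReal hint hnn
    rw [← hPo y B hB] at h2
    rw [ENNReal.ofReal_toReal (measure_ne_top μ _)] at h2
    have hsets : U ⁻¹' B = {ω | U ω ∈ B} := rfl
    rw [hsets, ← h2]
    congr 1
    ext ω
    simp only [Set.mem_inter_iff, Set.mem_preimage, Set.mem_setOf_eq]
    exact and_comm
  -- K1 and K2
  have K1 : ∀ y, μ {ω | Y ω = y} = ∫⁻ ω, G y ω ∂μ := by
    intro y
    have h := congrArg (fun ν : Measure (Fin n → ℝ) => ν Set.univ) (key y)
    simp only [Measure.map_apply mU MeasurableSet.univ, Set.preimage_univ,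
      Measure.restrict_apply_univ, withDensity_apply _ MeasurableSet.univ,
      Measure.restrict_univ] at h
    rw [h, lintegral_map (f := fun u : Fin n → ℝ => ENNReal.ofReal (∏ j, poissonP (u j) (y j)))
      (ENNReal.measurable_ofReal.comp (mg y)) mU]
    exact lintegral_congr fun ω => (hGof y ω).symm
  have K2 : ∀ (y : Fin n → ℕ) (i : Fin n),
      ∫⁻ ω in {ω | Y ω = y}, ENNReal.ofReal (U ω i) ∂μ
        = ∫⁻ ω, ENNReal.ofReal (U ω i) * G y ω ∂μ := by
    intro y i
    have h1 : ∫⁻ ω in {ω | Y ω = y}, ENNReal.ofReal (U ω i) ∂μ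
        = ∫⁻ u, ENNReal.ofReal (u i) ∂((μ.restrict {ω | Y ω = y}).map U) := by
      rw [lintegral_map (f := fun u : Fin n → ℝ => ENNReal.ofReal (u i))
        (ENNReal.measurable_ofReal.comp (measurable_pi_apply i)) mU]
    have mdens : Measurable fun u : Fin n → ℝ => ENNReal.ofReal (∏ j, poissonP (u j) (y j)) :=
      ENNReal.measurable_ofReal.comp (mg y)
    have mfi : Measurable fun u : Fin n → ℝ => ENNReal.ofReal (u i) :=
      ENNReal.measurable_ofReal.comp (measurable_pi_apply i)
    rw [h1, key y, lintegral_withDensity_eq_lintegral_mul _ mdens mfi]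
    simp only [Pi.mul_apply]
    rw [lintegral_map (f := fun u : Fin n → ℝ =>
          ENNReal.ofReal (∏ j, poissonP (u j) (y j)) * ENNReal.ofReal (u i))
        (mdens.mul mfi) mU]
    refine lintegral_congr fun ω => ?_
    rw [hGof y ω, mul_comm]
  -- real moments
  set dR : Fin n → ℝ := fun i => ∫ ω, U ω i ∂μ with hdRdef
  set A : Fin n → Fin n → ℝ := fun i k => ∫ ω, U ω i * U ω k ∂μ with hAdef
  have hUint : ∀ i, Integrable (fun ω => U ω i) μ := fun i => (hmom i).integrable one_le_two
  have hUUint : ∀ i k, Integrable (fun ω => U ω i * U ω k) μ := by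
    intro i k
    have hpqr : (1 : ℝ≥0∞) / 1 = 1 / 2 + 1 / 2 := by
      rw [div_one]
      exact (ENNReal.add_halves 1).symm
    haveI : ENNReal.HolderTriple 2 2 1 := ⟨by rw [inv_one, ENNReal.inv_two_add_inv_two]⟩
    have h := (hmom k).smul (hmom i) (r := 1)
    have h2 := memLp_one_iff_integrable.mp h
    exact h2
  have hdR0 : ∀ i, 0 ≤ dR i := fun i => integral_nonneg fun ω => hU0 ω i
  have hA0 : ∀ i k, 0 ≤ A i k := fun i k =>
    integral_nonneg fun ω => mul_nonneg (hU0 ω i) (hU0 ω k)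
  have hei_eq : ∀ i, ∫⁻ ω, ENNReal.ofReal (U ω i) ∂μ = ENNReal.ofReal (dR i) := by
    intro i
    rw [← ofReal_integral_eq_lintegral_ofReal (hUint i) (ae_of_all _ fun ω => hU0 ω i)]
  have haik_eq : ∀ i k, ∫⁻ ω, ENNReal.ofReal (U ω i) * ENNReal.ofReal (U ω k) ∂μ
      = ENNReal.ofReal (A i k) := by
    intro i k
    have h := ofReal_integral_eq_lintegral_ofReal (hUUint i k)
      (ae_of_all _ fun ω => mul_nonneg (hU0 ω i) (hU0 ω k))
    calc ∫⁻ ω, ENNReal.ofReal (U ω i) * ENNReal.ofReal (U ω k) ∂μ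
        = ∫⁻ ω, ENNReal.ofReal (U ω i * U ω k) ∂μ :=
          lintegral_congr fun ω => (ENNReal.ofReal_mul (hU0 ω i)).symm
      _ = ENNReal.ofReal (A i k) := h.symm
  -- ENNReal tsum identities
  have NP0 : ∑' y : Fin n → ℕ, μ {ω | Y ω = y} = 1 := by
    simp_rw [K1]
    rw [← lintegral_tsum fun y => (mG y).aemeasurable]
    have h : ∫⁻ ω, ∑' y, G y ω ∂μ = ∫⁻ (_ : Ω), 1 ∂μ :=
      lintegral_congr fun ω => tsum_weight_zero (fun j => hU0 ω j)
    rw [h]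
    simp
  have NP1 : ∀ k, ∑' y : Fin n → ℕ, (y k : ℝ≥0∞) * μ {ω | Y ω = y}
      = ENNReal.ofReal (dR k) := by
    intro k
    simp_rw [K1]
    have h1 : ∀ y : Fin n → ℕ, (y k : ℝ≥0∞) * ∫⁻ ω, G y ω ∂μ
        = ∫⁻ ω, (y k : ℝ≥0∞) * G y ω ∂μ := fun y => (lintegral_const_mul _ (mG y)).symm
    simp_rw [h1]
    rw [← lintegral_tsum fun y => ((mG y).const_mul _).aemeasurable, ← hei_eq k]
    exact lintegral_congr fun ω => tsum_weight_one (fun j => hU0 ω j) k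
  have NP2 : ∀ j k, ∑' y : Fin n → ℕ, (y j : ℝ≥0∞) * (y k : ℝ≥0∞) * μ {ω | Y ω = y}
      = ENNReal.ofReal (A j k) + (if j = k then ENNReal.ofReal (dR j) else 0) := by
    intro j k
    simp_rw [K1]
    have h1 : ∀ y : Fin n → ℕ, (y j : ℝ≥0∞) * (y k : ℝ≥0∞) * ∫⁻ ω, G y ω ∂μ
        = ∫⁻ ω, (y j : ℝ≥0∞) * (y k : ℝ≥0∞) * G y ω ∂μ :=
      fun y => (lintegral_const_mul _ (mG y)).symm
    simp_rw [h1]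
    rw [← lintegral_tsum fun y => ((mG y).const_mul _).aemeasurable]
    have h2 : ∫⁻ ω, ∑' y : Fin n → ℕ, (y j : ℝ≥0∞) * (y k : ℝ≥0∞) * G y ω ∂μ
        = ∫⁻ ω, (ENNReal.ofReal (U ω j) * ENNReal.ofReal (U ω k)
          + if j = k then ENNReal.ofReal (U ω j) else 0) ∂μ :=
      lintegral_congr fun ω => tsum_weight_pair (fun l => hU0 ω l) j k
    rw [h2]
    by_cases hjk : j = k
    · subst hjk
      simp only [if_true]
      rw [lintegral_add_left (show
        Measurable fun ω => ENNReal.ofReal (U ω j) * ENNReal.ofReal (U ω j) from (mVi j).mul (mVi j)), haik_eq j j, hei_eq j]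
    · simp only [hjk, if_false, add_zero]
      exact haik_eq j k
  have NQ1 : ∀ i, ∑' y : Fin n → ℕ, ∫⁻ ω in {ω | Y ω = y}, ENNReal.ofReal (U ω i) ∂μ
      = ENNReal.ofReal (dR i) := by
    intro i
    simp_rw [K2 _ i]
    rw [← lintegral_tsum fun y => (show
      Measurable fun ω => ENNReal.ofReal (U ω i) * G y ω from (mVi i).mul (mG y)).aemeasurable, ← hei_eq i]
    refine lintegral_congr fun ω => ?_
    rw [ENNReal.tsum_mul_left, tsum_weight_zero (fun j => hU0 ω j), mul_one]
  have NQ2 : ∀ i k, ∑' y : Fin n → ℕ,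
      (y k : ℝ≥0∞) * ∫⁻ ω in {ω | Y ω = y}, ENNReal.ofReal (U ω i) ∂μ
      = ENNReal.ofReal (A i k) := by
    intro i k
    simp_rw [K2 _ i]
    have h1 : ∀ y : Fin n → ℕ,
        (y k : ℝ≥0∞) * ∫⁻ ω, ENNReal.ofReal (U ω i) * G y ω ∂μ
        = ∫⁻ ω, ENNReal.ofReal (U ω i) * ((y k : ℝ≥0∞) * G y ω) ∂μ := by
      intro y
      rw [← lintegral_const_mul _ (show
        Measurable fun ω => ENNReal.ofReal (U ω i) * G y ω from (mVi i).mul (mG y))]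
      refine lintegral_congr fun ω => ?_
      ring
    simp_rw [h1]
    rw [← lintegral_tsum fun y => (show
      Measurable fun ω => ENNReal.ofReal (U ω i) * ((y k : ℝ≥0∞) * G y ω)
        from (mVi i).mul ((mG y).const_mul _)).aemeasurable,
      ← haik_eq i k]
    refine lintegral_congr fun ω => ?_
    rw [ENNReal.tsum_mul_left, tsum_weight_one (fun j => hU0 ω j) k]
  -- real-side sums
  set p : (Fin n → ℕ) → ℝ := fun y => (μ {ω | Y ω = y}).toReal with hpdef
  set qR : (Fin n → ℕ) → Fin n → ℝ := fun y i => ∫ ω in {ω | Y ω = y}, U ω i ∂μ with hqRdef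
  have hqR_lint : ∀ y i, qR y i
      = (∫⁻ ω in {ω | Y ω = y}, ENNReal.ofReal (U ω i) ∂μ).toReal := by
    intro y i
    exact integral_eq_lintegral_of_nonneg_ae (ae_of_all _ fun ω => hU0 ω i)
      (mUi i).aestronglyMeasurable
  have hQfin : ∀ y i, (∫⁻ ω in {ω | Y ω = y}, ENNReal.ofReal (U ω i) ∂μ) ≠ ⊤ := by
    intro y i
    refine (lt_of_le_of_lt (setLIntegral_le_lintegral _ _) ?_).ne
    rw [hei_eq i]
    exact ENNReal.ofReal_lt_top
  have hs0 : HasSum p 1 := by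
    have h := hasSum_toReal_of_tsum_eq (fun y => measure_ne_top μ _) ENNReal.one_ne_top NP0
    simpa using h
  have hs1 : ∀ k, HasSum (fun y : Fin n → ℕ => (y k : ℝ) * p y) (dR k) := by
    intro k
    have h := hasSum_toReal_of_tsum_eq
      (fun y => ENNReal.mul_ne_top (ENNReal.natCast_ne_top _) (measure_ne_top μ _))
      ENNReal.ofReal_ne_top (NP1 k)
    simpa [ENNReal.toReal_mul, ENNReal.toReal_ofReal (hdR0 k)] using h
  have hs2 : ∀ j k, HasSum (fun y : Fin n → ℕ => (y j : ℝ) * (y k : ℝ) * p y)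
      (A j k + if j = k then dR j else 0) := by
    intro j k
    have hLne : (ENNReal.ofReal (A j k) + (if j = k then ENNReal.ofReal (dR j) else 0)) ≠ ⊤ := by
      refine ENNReal.add_ne_top.mpr ⟨ENNReal.ofReal_ne_top, ?_⟩
      split_ifs
      · exact ENNReal.ofReal_ne_top
      · exact ENNReal.zero_ne_top
    have h := hasSum_toReal_of_tsum_eq
      (fun y => ENNReal.mul_ne_top (ENNReal.mul_ne_top (ENNReal.natCast_ne_top _)
        (ENNReal.natCast_ne_top _)) (measure_ne_top μ _)) hLne (NP2 j k)
    have htr : (ENNReal.ofReal (A j k) + (if j = k then ENNReal.ofReal (dR j) else 0)).toReal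
        = A j k + (if j = k then dR j else 0) := by
      rw [ENNReal.toReal_add ENNReal.ofReal_ne_top
        (by split_ifs; exacts [ENNReal.ofReal_ne_top, ENNReal.zero_ne_top]),
        ENNReal.toReal_ofReal (hA0 j k)]
      congr 1
      split_ifs with hjk
      · exact ENNReal.toReal_ofReal (hdR0 j)
      · simp
    rw [← htr]
    simpa [ENNReal.toReal_mul] using h
  have hs3 : ∀ i, HasSum (fun y : Fin n → ℕ => qR y i) (dR i) := by
    intro i
    have h := hasSum_toReal_of_tsum_eq (fun y => hQfin y i) ENNReal.ofReal_ne_top (NQ1 i)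
    rw [ENNReal.toReal_ofReal (hdR0 i)] at h
    have hfe : (fun y : Fin n → ℕ => qR y i)
        = fun y => (∫⁻ ω in {ω | Y ω = y}, ENNReal.ofReal (U ω i) ∂μ).toReal :=
      funext fun y => hqR_lint y i
    rw [hfe]
    exact h
  have hs4 : ∀ i k, HasSum (fun y : Fin n → ℕ => (y k : ℝ) * qR y i) (A i k) := by
    intro i k
    have h := hasSum_toReal_of_tsum_eq
      (fun y => ENNReal.mul_ne_top (ENNReal.natCast_ne_top _) (hQfin y i))
      ENNReal.ofReal_ne_top (NQ2 i k)
    rw [ENNReal.toReal_ofReal (hA0 i k)] at h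
    have hfe : (fun y : Fin n → ℕ => (y k : ℝ) * qR y i)
        = fun y => ((y k : ℝ≥0∞) * ∫⁻ ω in {ω | Y ω = y}, ENNReal.ofReal (U ω i) ∂μ).toReal := by
      funext y
      rw [ENNReal.toReal_mul, ENNReal.toReal_natCast, ← hqR_lint y i]
    rw [hfe]
    exact h
  -- the linear hypothesis, cleaned up
  have R0 : ∀ (y : Fin n → ℕ) (i : Fin n),
      qR y i = (∑ j, H i j * (y j : ℝ) + c i) * p y := by
    intro y i
    by_cases h : μ {ω | Y ω = y} = 0
    · have hz : μ.restrict {ω | Y ω = y} = 0 := Measure.restrict_eq_zero.mpr h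
      have h1 : qR y i = 0 := by
        show (∫ ω in {ω | Y ω = y}, U ω i ∂μ) = 0
        rw [hz, integral_zero_measure]
      have h2 : p y = 0 := by
        show (μ {ω | Y ω = y}).toReal = 0
        rw [h]
        simp
      rw [h1, h2, mul_zero]
    · have hthis := hlin y h i
      unfold condExpEvent at hthis
      have hpne : p y ≠ 0 := ENNReal.toReal_ne_zero.mpr ⟨h, measure_ne_top μ _⟩
      exact (div_eq_iff hpne).mp hthis
  -- moment equations
  have E1 : ∀ i, dR i = ∑ j, H i j * dR j + c i := by
    intro i
    have hfe : (fun y : Fin n → ℕ => qR y i)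
        = fun y => ∑ j, H i j * ((y j : ℝ) * p y) + c i * p y := by
      funext y
      rw [R0 y i, add_mul, Finset.sum_mul]
      congr 1
      exact Finset.sum_congr rfl fun j _ => by ring
    have h2 : HasSum (fun y : Fin n → ℕ => ∑ j, H i j * ((y j : ℝ) * p y) + c i * p y)
        (∑ j, H i j * dR j + c i * 1) :=
      (hasSum_sum fun j _ => (hs1 j).mul_left (H i j)).add (hs0.mul_left (c i))
    have h3 : HasSum (fun y : Fin n → ℕ => qR y i) (∑ j, H i j * dR j + c i * 1) := by
      rw [hfe]; exact h2
    have := (hs3 i).unique h3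
    simpa using this
  have E2 : ∀ i k, A i k = ∑ j, H i j * (A j k + if j = k then dR j else 0) + c i * dR k := by
    intro i k
    have hfe : (fun y : Fin n → ℕ => (y k : ℝ) * qR y i)
        = fun y => ∑ j, H i j * ((y j : ℝ) * (y k : ℝ) * p y) + c i * ((y k : ℝ) * p y) := by
      funext y
      rw [R0 y i, add_mul, Finset.sum_mul, mul_add, Finset.mul_sum]
      congr 1
      · exact Finset.sum_congr rfl fun j _ => by ring
      · ring
    have h2 : HasSum (fun y : Fin n → ℕ =>
          ∑ j, H i j * ((y j : ℝ) * (y k : ℝ) * p y) + c i * ((y k : ℝ) * p y))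
        (∑ j, H i j * (A j k + if j = k then dR j else 0) + c i * dR k) :=
      (hasSum_sum fun j _ => (hs2 j k).mul_left (H i j)).add ((hs1 k).mul_left (c i))
    have h3 : HasSum (fun y : Fin n → ℕ => (y k : ℝ) * qR y i)
        (∑ j, H i j * (A j k + if j = k then dR j else 0) + c i * dR k) := by
      rw [hfe]; exact h2
    exact (hs4 i k).unique h3
  -- covariance expansion
  have hIid : ∀ i, (∫ ω', U ω' i ∂μ) = dR i := fun i => rfl
  have hCov : ∀ i k, covMatrix μ U i k = A i k - dR i * dR k := by
    intro i k
    calc covMatrix μ U i k = ∫ ω, (U ω i - dR i) * (U ω k - dR k) ∂μ := by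
          simp only [covMatrix, Matrix.of_apply, hIid]
      _ = ∫ ω, (U ω i * U ω k - (dR i * U ω k + dR k * U ω i) + dR i * dR k) ∂μ := by
          congr 1
          funext ω
          ring
      _ = A i k - dR i * dR k := by
          have hInt1 : Integrable (fun ω => dR i * U ω k + dR k * U ω i) μ :=
            ((hUint k).const_mul (dR i)).add ((hUint i).const_mul (dR k))
          have hInt2 : Integrable
              (fun ω => U ω i * U ω k - (dR i * U ω k + dR k * U ω i)) μ :=
            (hUUint i k).sub hInt1
          rw [integral_add hInt2 (integrable_const _),
            integral_sub (hUUint i k) hInt1,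
            integral_add ((hUint k).const_mul (dR i)) ((hUint i).const_mul (dR k)),
            integral_const_mul, integral_const_mul, integral_const]
          simp only [measure_univ, probReal_univ, ENNReal.toReal_one, smul_eq_mul, one_mul, hIid]
          ring
  -- positivity of the means
  have hdpos : ∀ i, 0 < dR i := by
    intro i
    by_contra hneg
    have h0 : dR i = 0 := le_antisymm (not_lt.mp hneg) (hdR0 i)
    have hU0ae : (fun ω => U ω i) =ᵐ[μ] 0 :=
      (integral_eq_zero_iff_of_nonneg (fun ω => hU0 ω i) (hUint i)).mp ((hIid i).trans h0)
    have hAii : A i i = 0 := by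
      show (∫ ω, U ω i * U ω i ∂μ) = 0
      calc (∫ ω, U ω i * U ω i ∂μ) = ∫ _ω, (0 : ℝ) ∂μ := by
            refine integral_congr_ae (hU0ae.mono fun ω hω => ?_)
            rw [Pi.zero_apply] at hω
            simp [hω]
        _ = 0 := integral_zero _ _
    have hdiagpos : 0 < covMatrix μ U i i := posDef_diag_pos hcov i
    rw [hCov i i, hAii, h0] at hdiagpos
    simp at hdiagpos
  -- the matrix identity
  have hMat : covMatrix μ U = H * (covMatrix μ U + Matrix.diagonal dR) := by
    ext i k
    rw [Matrix.mul_apply]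
    simp only [Matrix.add_apply, Matrix.diagonal_apply]
    rw [hCov i k]
    have e1 := E1 i
    have e2 := E2 i k
    have hsum : ∑ j, H i j * (covMatrix μ U j k + if j = k then dR j else 0)
        = (∑ j, H i j * (A j k + if j = k then dR j else 0)) - (∑ j, H i j * dR j) * dR k := by
      rw [Finset.sum_mul, ← Finset.sum_sub_distrib]
      refine Finset.sum_congr rfl fun j _ => ?_
      rw [hCov j k]
      ring
    have e1' : (∑ j, H i j * dR j) = dR i - c i := by linarith
    have e2' : (∑ j, H i j * (A j k + if j = k then dR j else 0)) = A i k - c i * dR k := by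
      linarith
    rw [hsum, e1', e2']
    ring
  exact linalg_aux (covMatrix μ U) dR hcov hdpos H hMat
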